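/- Let (X,φ) be a Smale space and let x ∈ X be an asymptotic p-periodic point for some p ∈ ℤ with p ≠ 0. Let p_s and p_u be the least positive asymptotic periods of η^s(x) and η^u(x), respectively. Then ω(x) = {η^s(x), φ(η^s(x)), …, φ^{p_s−1}(η^s(x))} and α(x) = {η^u(x), φ(η^u(x)), …, φ^{p_u−1}(η^u(x))}. -/

import Mathlib

open Filter Set Topology

noncomputable section

/-- Integer iterate of a homeomorphism. -/
def hIter {X : Type*} [TopologicalSpace X] (φ : X ≃ₜ X) (n : ℤ) (x : X) : X :=
  ((φ.toEquiv : Equiv.Perm X) ^ n) x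

/-- The cocycle sums `f^n` of a function `f : X → ℤ` along the iterates of `φ`:
`f^n(x) = Σ_{i=0}^{n-1} f(φ^i(x))` for `n > 0`, `f^0 = 0`, and
`f^n(x) = −Σ_{i=n}^{-1} f(φ^i(x))` for `n < 0`. -/
def cSum {X : Type*} [TopologicalSpace X] (φ : X ≃ₜ X) (f : X → ℤ) (n : ℤ) (x : X) : ℤ :=
  if 0 ≤ n then ∑ i ∈ Finset.range n.toNat, f (hIter φ i x)
  else -∑ i ∈ Finset.range (-n).toNat, f (hIter φ (n + i) x)

/-- Stable asymptotic pairs (limit definition). -/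
def asympS {X : Type*} [MetricSpace X] (φ : X ≃ₜ X) : Set (X × X) :=
  {p | Tendsto (fun n : ℕ => dist (hIter φ n p.1) (hIter φ n p.2)) atTop (nhds 0)}

/-- Unstable asymptotic pairs (limit definition). -/
def asympU {X : Type*} [MetricSpace X] (φ : X ≃ₜ X) : Set (X × X) :=
  {p | Tendsto (fun n : ℕ => dist (hIter φ (-(n : ℤ)) p.1) (hIter φ (-(n : ℤ)) p.2))
    atTop (nhds 0)}

/-- Asymptotic pairs (limit definition). -/
def asympA {X : Type*} [MetricSpace X] (φ : X ≃ₜ X) : Set (X × X) := asympS φ ∩ asympU φ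

/-- The `ω`-limit set of `x`. -/
def omegaSet {X : Type*} [MetricSpace X] (φ : X ≃ₜ X) (x : X) : Set X :=
  {z | ∃ n : ℕ → ℕ, StrictMono n ∧ Tendsto (fun i => hIter φ (n i) x) atTop (nhds z)}

/-- The `α`-limit set of `x`. -/
def alphaSet {X : Type*} [MetricSpace X] (φ : X ≃ₜ X) (x : X) : Set X :=
  {z | ∃ n : ℕ → ℤ, StrictAnti n ∧ Tendsto (fun i => hIter φ (n i) x) atTop (nhds z)}

/-- A Smale space structure on a compact metric space `X`. -/
structure SmaleSpace (X : Type*) [MetricSpace X] [CompactSpace X] where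
  phi : X ≃ₜ X
  eps : ℝ
  lam : ℝ
  br : X → X → X
  eps_pos : 0 < eps
  lam_pos : 0 < lam
  lam_lt_one : lam < 1
  br_cont : ContinuousOn (fun p : X × X => br p.1 p.2) {p : X × X | dist p.1 p.2 < eps}
  br_self : ∀ x : X, br x x = x
  br_assoc_left : ∀ x y z : X, dist x y < eps → dist (br x y) z < eps → dist x z < eps →
    br (br x y) z = br x z
  br_assoc_right : ∀ x y z : X, dist y z < eps → dist x (br y z) < eps → dist x z < eps →
    br x (br y z) = br x z
  phi_br : ∀ x y : X, dist x y < eps → dist (phi x) (phi y) < eps →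
    phi (br x y) = br (phi x) (phi y)
  contract_s : ∀ x y z : X, br y x = y → dist x y < eps → br z x = z → dist x z < eps →
    dist (phi y) (phi z) ≤ lam * dist y z
  contract_u : ∀ x y z : X, br x y = y → dist x y < eps → br x z = z → dist x z < eps →
    dist (phi.symm y) (phi.symm z) ≤ lam * dist y z

namespace SmaleSpace

variable {X Y : Type*} [MetricSpace X] [CompactSpace X] [MetricSpace Y] [CompactSpace Y]

/-- Local stable set `X^s(x,ε)`. -/
def Xs (S : SmaleSpace X) (x : X) (ε : ℝ) : Set X := {y | S.br y x = y ∧ dist x y < ε}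

/-- Local unstable set `X^u(x,ε)`. -/
def Xu (S : SmaleSpace X) (x : X) (ε : ℝ) : Set X := {y | S.br x y = y ∧ dist x y < ε}

def Gs0 (S : SmaleSpace X) : Set (X × X) := {p | p.2 ∈ S.Xs p.1 S.eps}

def Gu0 (S : SmaleSpace X) : Set (X × X) := {p | p.2 ∈ S.Xu p.1 S.eps}

/-- `G_φ^{s,n} = (φ×φ)^{-n}(G_φ^{s,0})`. -/
def GsN (S : SmaleSpace X) (n : ℤ) : Set (X × X) :=
  {p | (hIter S.phi n p.1, hIter S.phi n p.2) ∈ S.Gs0}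

/-- `G_φ^{u,n} = (φ×φ)^{n}(G_φ^{u,0})`. -/
def GuN (S : SmaleSpace X) (n : ℤ) : Set (X × X) :=
  {p | (hIter S.phi (-n) p.1, hIter S.phi (-n) p.2) ∈ S.Gu0}

def GaN (S : SmaleSpace X) (n : ℤ) : Set (X × X) := S.GsN n ∩ S.GuN n

/-- The asymptotic equivalence relation `G_φ^a = ⋃_{n ≥ 0} G_φ^{a,n}`. -/
def Ga (S : SmaleSpace X) : Set (X × X) := ⋃ n : ℕ, S.GaN n

lemma gaN_subset_ga (S : SmaleSpace X) (n : ℕ) : S.GaN n ⊆ S.Ga :=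
  Set.subset_iUnion (fun k : ℕ => S.GaN k) n

/-- The inductive limit topology on `G_φ^a`: a set is open iff its intersection with each
`G_φ^{a,n}` is open in the subspace topology from `X × X`. -/
def gaTopology (S : SmaleSpace X) : TopologicalSpace ↥S.Ga :=
  ⨆ n : ℕ, TopologicalSpace.coinduced (Set.inclusion (S.gaN_subset_ga n)) inferInstance

/-- Irreducibility of a Smale space. -/
def Irreducible (S : SmaleSpace X) : Prop :=
  ∀ U V : Set X, IsOpen U → U.Nonempty → IsOpen V → V.Nonempty →
    ∃ K : ℕ, ((hIter S.phi K '' U) ∩ V).Nonempty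

def IsPeriodicPoint (S : SmaleSpace X) (x : X) : Prop :=
  ∃ p : ℕ, 0 < p ∧ hIter S.phi p x = x

/-- `h` is a flip conjugacy between `(X,φ)` and `(Y,ψ)`. -/
def IsFlipConjugacy (S : SmaleSpace X) (T : SmaleSpace Y) (h : X ≃ₜ Y) : Prop :=
  (∀ x, h (S.phi x) = T.phi (h x)) ∨ (∀ x, h (S.phi x) = T.phi.symm (h x))

def FlipConjugate (S : SmaleSpace X) (T : SmaleSpace Y) : Prop :=
  ∃ h : X ≃ₜ Y, IsFlipConjugacy S T h

/-- An isomorphism of the principal étale groupoids `G_φ^a` and `G_ψ^a`: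
a bijection which is a homeomorphism for the inductive limit topologies and preserves
the (equivalence relation) groupoid structure. -/
structure GaIso (S : SmaleSpace X) (T : SmaleSpace Y) where
  toEquiv : ↥S.Ga ≃ ↥T.Ga
  cont : @Continuous _ _ S.gaTopology T.gaTopology toEquiv
  cont_symm : @Continuous _ _ T.gaTopology S.gaTopology toEquiv.symm
  map_mul : ∀ p q r : ↥S.Ga, (p : X × X).2 = (q : X × X).1 →
    (r : X × X) = ((p : X × X).1, (q : X × X).2) →
    (toEquiv p : Y × Y).2 = (toEquiv q : Y × Y).1 ∧
      (toEquiv r : Y × Y) = ((toEquiv p : Y × Y).1, (toEquiv q : Y × Y).2)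

end SmaleSpace



section Helpers14

variable {Z : Type*} [TopologicalSpace Z]

lemma hIter_add' (φ : Z ≃ₜ Z) (m n : ℤ) (x : Z) :
    hIter φ (m + n) x = hIter φ m (hIter φ n x) := by
  simp [hIter, zpow_add, Equiv.Perm.mul_apply]

lemma hIter_zero' (φ : Z ≃ₜ Z) (x : Z) : hIter φ 0 x = x := by simp [hIter]

lemma hIter_one' (φ : Z ≃ₜ Z) (x : Z) : hIter φ 1 x = φ x := by simp [hIter]

lemma hIter_neg_one' (φ : Z ≃ₜ Z) (x : Z) : hIter φ (-1) x = φ.symm x := by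
  show (φ.toEquiv ^ (-1 : ℤ)) x = _
  rw [zpow_neg_one]
  rfl

lemma hIter_continuous' (φ : Z ≃ₜ Z) (n : ℤ) : Continuous (hIter φ n) := by
  induction n using Int.induction_on with
  | zero =>
      have h : (hIter φ (0 : ℤ)) = fun x : Z => x := funext fun x => hIter_zero' φ x
      rw [h]; exact continuous_id
  | succ k ih =>
      have h : (hIter φ ((k : ℤ) + 1)) = fun x => φ (hIter φ k x) := by
        funext x
        rw [show ((k : ℤ) + 1) = 1 + k by ring, hIter_add', hIter_one']
      rw [h]; exact φ.continuous.comp ih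
  | pred k ih =>
      have h : (hIter φ (-(k : ℤ) - 1)) = fun x => φ.symm (hIter φ (-k) x) := by
        funext x
        rw [show (-(k : ℤ) - 1) = -1 + -k by ring, hIter_add', hIter_neg_one']
      rw [h]; exact φ.symm.continuous.comp ih

lemma hIter_fix_nat' (φ : Z ≃ₜ Z) {q : ℤ} {y : Z} (h : hIter φ q y = y) (m : ℕ) :
    hIter φ (q * m) y = y := by
  induction m with
  | zero => simpa using hIter_zero' φ y
  | succ k ih =>
      have e : q * ((k : ℤ) + 1) = q + q * k := by ring
      rw [Nat.cast_add, Nat.cast_one, e, hIter_add', ih, h]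

end Helpers14

lemma fix_of_tendsto' {X : Type*} [MetricSpace X] (φ : X ≃ₜ X) {N : ℤ} {x y : X}
    (h : Tendsto (fun k : ℕ => hIter φ (N * k) x) atTop (nhds y)) :
    hIter φ N y = y := by
  have h1 : Tendsto (fun k : ℕ => hIter φ (N * (k + 1 : ℕ)) x) atTop (nhds y) :=
    h.comp (tendsto_add_atTop_nat 1)
  have h2 : Tendsto (fun k : ℕ => hIter φ N (hIter φ (N * k) x)) atTop
      (nhds (hIter φ N y)) := ((hIter_continuous' φ N).tendsto y).comp h
  refine tendsto_nhds_unique (h2.congr fun k => ?_) h1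
  rw [← hIter_add']
  congr 1
  push_cast
  ring

lemma eq_of_dist_seq' {X : Type*} [MetricSpace X] {a b : X} {F : ℕ → ℝ}
    (h0 : Tendsto F atTop (nhds 0)) {g : ℕ → ℕ} (hg : Tendsto g atTop atTop)
    (hc : ∀ k, F (g k) = dist a b) : a = b := by
  have h1 : Tendsto (fun _ : ℕ => dist a b) atTop (nhds 0) := (h0.comp hg).congr hc
  have : dist a b = 0 := tendsto_nhds_unique tendsto_const_nhds h1
  exact dist_eq_zero.mp this

/-- For an asymptotic `p`-periodic point `x`, the `ω`-limit set of `x` is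
the `φ`-orbit `{η^s(x), …, φ^{p_s-1}(η^s(x))}` and the `α`-limit set of `x` is
`{η^u(x), …, φ^{p_u-1}(η^u(x))}`. -/
theorem omega_alpha_limit_sets {X : Type*} [MetricSpace X] [CompactSpace X]
    (S : SmaleSpace X) (x : X) (p : ℤ) (hp : p ≠ 0)
    (hx : (hIter S.phi p x, x) ∈ asympA S.phi)
    (ys yu : X)
    (hys : Tendsto (fun k : ℕ => hIter S.phi (|p| * k) x) atTop (nhds ys))
    (hyu : Tendsto (fun k : ℕ => hIter S.phi (-(|p| * k)) x) atTop (nhds yu))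
    (ps pu : ℤ)
    (hps : IsLeast {q : ℤ | 0 < q ∧ (hIter S.phi q ys, ys) ∈ asympA S.phi} ps)
    (hpu : IsLeast {q : ℤ | 0 < q ∧ (hIter S.phi q yu, yu) ∈ asympA S.phi} pu) :
    omegaSet S.phi x = {z | ∃ j : ℤ, 0 ≤ j ∧ j < ps ∧ z = hIter S.phi j ys} ∧
    alphaSet S.phi x = {z | ∃ j : ℤ, 0 ≤ j ∧ j < pu ∧ z = hIter S.phi j yu} := by
  set φ := S.phi with hphi
  have hP : (0 : ℤ) < |p| := abs_pos.mpr hp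
  set P : ℤ := |p| with hPdef
  set Pn : ℕ := P.toNat with hPndef
  have hPn : 0 < Pn := by omega
  have hPcast : (Pn : ℤ) = P := Int.toNat_of_nonneg hP.le
  have hpsp : 0 < ps := hps.1.1
  have hpup : 0 < pu := hpu.1.1
  -- actual periodicity of ys and yu
  have hfixs : hIter φ P ys = ys := fix_of_tendsto' φ hys
  have hyu' : Tendsto (fun k : ℕ => hIter φ ((-P) * k) x) atTop (nhds yu) := by
    refine hyu.congr fun k => ?_
    congr 1
    ring
  have hfixu : hIter φ (-P) yu = yu := fix_of_tendsto' φ hyu'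
  have hmulP : Tendsto (fun k : ℕ => Pn * k) atTop atTop :=
    tendsto_atTop_mono (fun k => Nat.le_mul_of_pos_left k hPn) tendsto_id
  -- ys is genuinely ps-periodic
  have hSs : Tendsto (fun n : ℕ =>
      dist (hIter φ n (hIter φ ps ys)) (hIter φ n ys)) atTop (nhds 0) := hps.1.2.1
  have hfix_ps : hIter φ ps ys = ys := by
    refine eq_of_dist_seq' hSs hmulP fun k => ?_
    have e1 : ((Pn * k : ℕ) : ℤ) = P * k := by push_cast [hPcast]; ring
    have e2 : hIter φ ((Pn * k : ℕ) : ℤ) ys = ys := by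
      rw [e1]; exact hIter_fix_nat' φ hfixs k
    have e3 : hIter φ ((Pn * k : ℕ) : ℤ) (hIter φ ps ys) = hIter φ ps ys := by
      rw [e1, ← hIter_add', show P * (k : ℤ) + ps = ps + P * k by ring, hIter_add',
        hIter_fix_nat' φ hfixs k]
    rw [e2, e3]
  -- yu is genuinely pu-periodic
  have hSu : Tendsto (fun n : ℕ =>
      dist (hIter φ (-(n : ℤ)) (hIter φ pu yu)) (hIter φ (-(n : ℤ)) yu)) atTop
      (nhds 0) := hpu.1.2.2
  have hfix_pu : hIter φ pu yu = yu := by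
    refine eq_of_dist_seq' hSu hmulP fun k => ?_
    have e1 : (-((Pn * k : ℕ) : ℤ)) = (-P) * k := by push_cast [hPcast]; ring
    have e2 : hIter φ (-((Pn * k : ℕ) : ℤ)) yu = yu := by
      rw [e1]; exact hIter_fix_nat' φ hfixu k
    have e3 : hIter φ (-((Pn * k : ℕ) : ℤ)) (hIter φ pu yu) = hIter φ pu yu := by
      rw [e1, ← hIter_add', show (-P) * (k : ℤ) + pu = pu + (-P) * k by ring, hIter_add',
        hIter_fix_nat' φ hfixu k]
    rw [e2, e3]
  -- reduction modulo a genuine period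
  have hred : ∀ (y : X) (q : ℤ), 0 < q → hIter φ q y = y → ∀ r : ℤ, 0 ≤ r →
      hIter φ r y = hIter φ (r % q) y := by
    intro y q hq hfix r hr
    have hdiv : r % q + q * (r / q) = r := by
      have := Int.mul_ediv_add_emod r q
      linarith
    have hm : (0 : ℤ) ≤ r / q := Int.ediv_nonneg hr hq.le
    have h1 : hIter φ r y = hIter φ (r % q) (hIter φ (q * (r / q)) y) := by
      rw [← hIter_add', hdiv]
    rw [h1]
    congr 1
    have h2 : q * (r / q) = q * ((r / q).toNat : ℤ) := by rw [Int.toNat_of_nonneg hm]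
    rw [h2, hIter_fix_nat' φ hfix]
  constructor
  · -- omega limit set
    ext z
    constructor
    · rintro ⟨n, hmono, hlim⟩
      have hfreq : ∃ r : ℕ, ∃ᶠ i in atTop, n i % Pn = r := by
        by_contra hcon
        push_neg at hcon
        have hev : ∀ r : ℕ, ∀ᶠ i in atTop, ¬ (n i % Pn = r) := by
          intro r
          have := hcon r
          exact this
        have h2 : ∀ᶠ i in atTop, ∀ r ∈ Finset.range Pn, ¬ (n i % Pn = r) :=
          (Filter.eventually_all_finset _).2 fun r _ => hev r
        obtain ⟨i, hi⟩ := h2.exists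
        exact hi (n i % Pn) (Finset.mem_range.mpr (Nat.mod_lt _ hPn)) rfl
      obtain ⟨r, hr⟩ := hfreq
      obtain ⟨g, hg, hgr⟩ := Filter.extraction_of_frequently_atTop hr
      set q : ℕ → ℕ := fun i => n (g i) / Pn with hqdef
      have hnq : ∀ i, n (g i) = Pn * q i + r := by
        intro i
        have := Nat.div_add_mod (n (g i)) Pn
        rw [hgr i] at this
        exact this.symm
      have hqten : Tendsto q atTop atTop := by
        rw [tendsto_atTop_atTop]
        intro b
        refine ⟨Pn * b, fun i hi => ?_⟩
        have h1 : Pn * b ≤ n (g i) :=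
          le_trans hi (le_trans hg.le_apply hmono.le_apply)
        exact (Nat.le_div_iff_mul_le hPn).2 (by linarith)
      have hsub : Tendsto (fun i => hIter φ (n (g i) : ℤ) x) atTop (nhds z) :=
        hlim.comp hg.tendsto_atTop
      have hylim : Tendsto (fun i => hIter φ (P * (q i : ℤ)) x) atTop (nhds ys) :=
        hys.comp hqten
      have hz2 : Tendsto (fun i => hIter φ (r : ℤ) (hIter φ (P * (q i : ℤ)) x)) atTop
          (nhds (hIter φ (r : ℤ) ys)) := ((hIter_continuous' φ r).tendsto ys).comp hylim
      have heq : z = hIter φ (r : ℤ) ys := by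
        refine tendsto_nhds_unique hsub (hz2.congr fun i => ?_)
        rw [← hIter_add']
        congr 1
        rw [hnq i]
        push_cast [hPcast]
        ring
      refine ⟨(r : ℤ) % ps, Int.emod_nonneg _ (ne_of_gt hpsp),
        Int.emod_lt_of_pos _ hpsp, ?_⟩
      rw [heq, hred ys ps hpsp hfix_ps (r : ℤ) (by positivity)]
    · rintro ⟨j, hj0, hjps, rfl⟩
      refine ⟨fun k => Pn * k + j.toNat, ?_, ?_⟩
      · intro a b hab
        exact Nat.add_lt_add_right (mul_lt_mul_of_pos_left hab hPn) _
      · have hten : Tendsto (fun k : ℕ => hIter φ j (hIter φ (P * (k : ℤ)) x)) atTop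
            (nhds (hIter φ j ys)) := ((hIter_continuous' φ j).tendsto ys).comp hys
        refine hten.congr fun k => ?_
        rw [← hIter_add']
        congr 1
        push_cast [Int.toNat_of_nonneg hj0, hPcast]
        ring
  · -- alpha limit set
    ext z
    constructor
    · rintro ⟨n, hanti, hlim⟩
      have hle : ∀ i : ℕ, n i ≤ n 0 - i := by
        intro i
        induction i with
        | zero => simp
        | succ k ih =>
            have h1 : n (k + 1) < n k := hanti (Nat.lt_succ_self k)
            push_cast
            omega
      have hnbot : Tendsto n atTop atBot := by
        refine tendsto_atBot_mono hle ?_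
        have h1 : Tendsto (fun i : ℕ => -(i : ℤ)) atTop atBot :=
          tendsto_neg_atTop_atBot.comp tendsto_natCast_atTop_atTop
        have h2 := tendsto_atBot_add_const_left atTop (n 0) h1
        refine h2.congr fun i => ?_
        ring
      have hfreq : ∃ r : ℕ, ∃ᶠ i in atTop, (n i % P).toNat = r := by
        by_contra hcon
        push_neg at hcon
        have hev : ∀ r : ℕ, ∀ᶠ i in atTop, ¬ ((n i % P).toNat = r) := by
          intro r
          have := hcon r
          exact this
        have h2 : ∀ᶠ i in atTop, ∀ r ∈ Finset.range Pn, ¬ ((n i % P).toNat = r) :=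
          (Filter.eventually_all_finset _).2 fun r _ => hev r
        obtain ⟨i, hi⟩ := h2.exists
        have hlt : (n i % P).toNat < Pn := by
          have hb := Int.emod_lt_of_pos (n i) hP
          have hnn := Int.emod_nonneg (n i) (ne_of_gt hP)
          omega
        exact hi ((n i % P).toNat) (Finset.mem_range.mpr hlt) rfl
      obtain ⟨r, hr⟩ := hfreq
      obtain ⟨g, hg, hgr⟩ := Filter.extraction_of_frequently_atTop hr
      have hrmod : ∀ i, n (g i) % P = (r : ℤ) := by
        intro i
        have hnn := Int.emod_nonneg (n (g i)) (ne_of_gt hP)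
        rw [← Int.toNat_of_nonneg hnn, hgr i]
      set q : ℕ → ℤ := fun i => n (g i) / P with hqdef
      have hnq : ∀ i, n (g i) = P * q i + r := by
        intro i
        have := Int.mul_ediv_add_emod (n (g i)) P
        rw [hrmod i] at this
        exact this.symm
      have hgbot : Tendsto (fun i => n (g i)) atTop atBot :=
        hnbot.comp hg.tendsto_atTop
      have hqbot : Tendsto q atTop atBot := by
        rw [tendsto_atTop_atBot]
        intro b
        obtain ⟨N, hN⟩ := (tendsto_atTop_atBot.1 hgbot) (P * b)
        refine ⟨N, fun i hi => ?_⟩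
        have h1 : n (g i) / P ≤ (P * b) / P := Int.ediv_le_ediv hP (hN i hi)
        rwa [Int.mul_ediv_cancel_left b (ne_of_gt hP)] at h1
      have hevq : ∀ᶠ i in atTop, q i ≤ 0 := hqbot.eventually_le_atBot 0
      set m : ℕ → ℕ := fun i => (-(q i)).toNat with hmdef
      have hmten : Tendsto m atTop atTop := by
        rw [tendsto_atTop_atTop]
        intro b
        obtain ⟨N, hN⟩ := (tendsto_atTop_atBot.1 hqbot) (-(b : ℤ))
        refine ⟨N, fun i hi => ?_⟩
        have h1 : q i ≤ -(b : ℤ) := hN i hi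
        have h2 : (b : ℤ) ≤ -(q i) := by linarith
        simp only [hmdef]
        exact (Int.le_toNat (by linarith)).2 h2
      have hlimu : Tendsto (fun i => hIter φ (P * q i) x) atTop (nhds yu) := by
        have h1 : Tendsto (fun i => hIter φ (-(P * ((m i : ℕ) : ℤ))) x) atTop
            (nhds yu) := hyu.comp hmten
        refine h1.congr' ?_
        filter_upwards [hevq] with i hi
        congr 1
        have : ((m i : ℕ) : ℤ) = -(q i) := Int.toNat_of_nonneg (by linarith)
        rw [this]
        ring
      have hsub : Tendsto (fun i => hIter φ (n (g i)) x) atTop (nhds z) :=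
        hlim.comp hg.tendsto_atTop
      have hz2 : Tendsto (fun i => hIter φ (r : ℤ) (hIter φ (P * q i) x)) atTop
          (nhds (hIter φ (r : ℤ) yu)) := ((hIter_continuous' φ r).tendsto yu).comp hlimu
      have heq : z = hIter φ (r : ℤ) yu := by
        refine tendsto_nhds_unique hsub (hz2.congr fun i => ?_)
        rw [← hIter_add']
        congr 1
        rw [hnq i]
        ring
      refine ⟨(r : ℤ) % pu, Int.emod_nonneg _ (ne_of_gt hpup),
        Int.emod_lt_of_pos _ hpup, ?_⟩
      rw [heq, hred yu pu hpup hfix_pu (r : ℤ) (by positivity)]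
    · rintro ⟨j, hj0, hjpu, rfl⟩
      refine ⟨fun k => j - P * k, ?_, ?_⟩
      · intro a b hab
        have h1 : P * (a : ℤ) < P * (b : ℤ) :=
          (mul_lt_mul_iff_right₀ hP).2 (by exact_mod_cast hab)
        simpa using sub_lt_sub_left h1 j
      · have hten : Tendsto (fun k : ℕ => hIter φ j (hIter φ (-(P * (k : ℤ))) x)) atTop
            (nhds (hIter φ j yu)) := ((hIter_continuous' φ j).tendsto yu).comp hyu
        refine hten.congr fun k => ?_
        rw [← hIter_add']
        show _ = hIter φ (j - P * (k : ℤ)) x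
        rw [sub_eq_add_neg]
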